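/- Let u : [0,T] → H be twice continuously differentiable into a real Hilbert space H, b a symmetric nonnegative continuous bilinear form on a dense subspace, and suppose ⟨u''(t), v⟩ + b(u(t), v) = 0 for all v in the subspace and all t, with u'(0) = 0. Then ‖u(t)‖ ≤ ‖u(0)‖ for all t ∈ [0,T]. (Energy estimate for the homogeneous wave equation with zero initial velocity.) -/

import Mathlib

open intervalIntegral MeasureTheory Set

lemma dbl_int_nonneg {f : ℝ → ℝ → ℝ}
    (hf : Continuous fun p : ℝ × ℝ => f p.1 p.2)
    {r : ℝ} (hr : 0 ≤ r)
    (hposf : ∀ (n : ℕ) (x : ℕ → ℝ), (∀ i, x i ∈ Set.Icc 0 r) →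
      0 ≤ ∑ i ∈ Finset.range n, ∑ j ∈ Finset.range n, f (x i) (x j)) :
    0 ≤ ∫ t in (0:ℝ)..r, ∫ s in (0:ℝ)..r, f t s := by
  rcases hr.eq_or_lt with h0 | hrpos
  · simp [← h0]
  set I := ∫ t in (0:ℝ)..r, ∫ s in (0:ℝ)..r, f t s with hI
  have key : ∀ ε : ℝ, 0 < ε → -(ε * (r * r)) ≤ I := by
    intro ε hε
    have hK : IsCompact (Set.Icc (0:ℝ) r ×ˢ Set.Icc (0:ℝ) r) :=
      isCompact_Icc.prod isCompact_Icc
    have huc : UniformContinuousOn (fun p : ℝ × ℝ => f p.1 p.2)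
        (Set.Icc (0:ℝ) r ×ˢ Set.Icc (0:ℝ) r) :=
      hK.uniformContinuousOn_of_continuous hf.continuousOn
    obtain ⟨δ, hδ, hδ'⟩ := Metric.uniformContinuousOn_iff.mp huc ε hε
    obtain ⟨n, hn⟩ := exists_nat_gt (r / δ)
    have hnpos : 0 < (n : ℝ) := (div_pos hrpos hδ).trans hn
    set Δ : ℝ := r / n with hΔ
    have hΔpos : 0 < Δ := div_pos hrpos hnpos
    have hmesh : Δ < δ := by
      rw [hΔ, div_lt_iff₀ hnpos]
      have := (div_lt_iff₀ hδ).mp hn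
      nlinarith
    set a : ℕ → ℝ := fun k => k * Δ with ha
    have ha0 : a 0 = 0 := by simp [ha]
    have han : a n = r := by
      simp only [ha, hΔ]
      field_simp
    have hastep : ∀ k, a (k + 1) - a k = Δ := by
      intro k; simp only [ha]; push_cast; ring
    have hamono : ∀ k, a k ≤ a (k + 1) := by
      intro k; have := hastep k; linarith
    have hamem : ∀ k, k ≤ n → a k ∈ Set.Icc (0:ℝ) r := by
      intro k hk
      constructor
      · exact mul_nonneg (Nat.cast_nonneg k) hΔpos.le
      · rw [← han, ha]
        exact mul_le_mul_of_nonneg_right (by exact_mod_cast hk) hΔpos.le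
    -- continuity facts
    have hft : ∀ t : ℝ, Continuous fun s => f t s := fun t =>
      hf.comp (continuous_const.prodMk continuous_id)
    have hcell : ∀ c d : ℝ, Continuous fun t => ∫ s in c..d, f t s := fun c d =>
      intervalIntegral.continuous_parametric_intervalIntegral_of_continuous' hf c d
    set g : ℝ → ℝ := fun t => ∫ s in (0:ℝ)..r, f t s with hg
    have hgc : Continuous g := hcell 0 r
    -- Step A
    have stepA : I = ∑ i ∈ Finset.range n, ∫ t in a i..a (i + 1), g t := by
      rw [hI]
      have := intervalIntegral.sum_integral_adjacent_intervals
        (a := a) (n := n) (f := g) (μ := volume)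
        (fun k _ => (hgc.intervalIntegrable _ _))
      rw [ha0, han] at this
      exact this.symm
    -- Step B
    have stepB : ∀ i, (∫ t in a i..a (i + 1), g t)
        = ∑ j ∈ Finset.range n, ∫ t in a i..a (i + 1), ∫ s in a j..a (j + 1), f t s := by
      intro i
      have hgt : ∀ t, g t = ∑ j ∈ Finset.range n, ∫ s in a j..a (j + 1), f t s := by
        intro t
        have := intervalIntegral.sum_integral_adjacent_intervals
          (a := a) (n := n) (f := fun s => f t s) (μ := volume)
          (fun k _ => ((hft t).intervalIntegrable _ _))
        rw [ha0, han] at this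
        exact this.symm
      rw [intervalIntegral.integral_congr (g := fun t =>
        ∑ j ∈ Finset.range n, ∫ s in a j..a (j + 1), f t s) (fun t _ => hgt t)]
      exact intervalIntegral.integral_finset_sum
        (fun j _ => ((hcell (a j) (a (j + 1))).intervalIntegrable _ _))
    -- Step C : cell lower bound
    have stepC : ∀ i ∈ Finset.range n, ∀ j ∈ Finset.range n,
        (f (a i) (a j) - ε) * (Δ * Δ) ≤ ∫ t in a i..a (i + 1), ∫ s in a j..a (j + 1), f t s := by
      intro i hi j hj
      rw [Finset.mem_range] at hi hj
      have hiK : a i ∈ Set.Icc (0:ℝ) r := hamem i hi.le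
      have hjK : a j ∈ Set.Icc (0:ℝ) r := hamem j hj.le
      have hi1 : a (i+1) ∈ Set.Icc (0:ℝ) r := hamem (i+1) hi
      have hj1 : a (j+1) ∈ Set.Icc (0:ℝ) r := hamem (j+1) hj
      have hpt : ∀ t ∈ Set.Icc (a i) (a (i+1)), ∀ s ∈ Set.Icc (a j) (a (j+1)),
          f (a i) (a j) - ε ≤ f t s := by
        intro t ht s hs
        have htK : t ∈ Set.Icc (0:ℝ) r := ⟨hiK.1.trans ht.1, ht.2.trans hi1.2⟩
        have hsK : s ∈ Set.Icc (0:ℝ) r := ⟨hjK.1.trans hs.1, hs.2.trans hj1.2⟩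
        have hdist : dist ((t, s) : ℝ × ℝ) ((a i, a j) : ℝ × ℝ) < δ := by
          rw [Prod.dist_eq]
          have h1 : dist t (a i) < δ := by
            rw [Real.dist_eq, abs_lt]
            have := hastep i; constructor <;> [linarith [ht.1, ht.2]; linarith [ht.1, ht.2]]
          have h2 : dist s (a j) < δ := by
            rw [Real.dist_eq, abs_lt]
            have := hastep j; constructor <;> [linarith [hs.1, hs.2]; linarith [hs.1, hs.2]]
          exact max_lt h1 h2
        have := hδ' (t, s) (Set.mk_mem_prod htK hsK) (a i, a j) (Set.mk_mem_prod hiK hjK) hdist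
        rw [Real.dist_eq, abs_lt] at this
        linarith [this.1, this.2]
      have hinner : ∀ t ∈ Set.Icc (a i) (a (i+1)),
          (f (a i) (a j) - ε) * Δ ≤ ∫ s in a j..a (j + 1), f t s := by
        intro t ht
        have := intervalIntegral.integral_mono_on (a := a j) (b := a (j+1))
          (f := fun _ => f (a i) (a j) - ε) (g := fun s => f t s) (μ := volume)
          (hamono j) (intervalIntegrable_const) ((hft t).intervalIntegrable _ _)
          (fun s hs => hpt t ht s hs)
        rwa [intervalIntegral.integral_const, hastep j, smul_eq_mul, mul_comm] at this
      have := intervalIntegral.integral_mono_on (a := a i) (b := a (i+1))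
        (f := fun _ => (f (a i) (a j) - ε) * Δ)
        (g := fun t => ∫ s in a j..a (j + 1), f t s) (μ := volume)
        (hamono i) (intervalIntegrable_const) ((hcell (a j) (a (j+1))).intervalIntegrable _ _)
        hinner
      rwa [intervalIntegral.integral_const, hastep i, smul_eq_mul, ← mul_assoc,
        mul_comm Δ, mul_assoc] at this
    -- combine
    have hsum : ∑ i ∈ Finset.range n, ∑ j ∈ Finset.range n, (f (a i) (a j) - ε) * (Δ * Δ) ≤ I := by
      rw [stepA]
      refine Finset.sum_le_sum (fun i hi => ?_)
      rw [stepB i]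
      exact Finset.sum_le_sum (fun j hj => stepC i hi j hj)
    have hposS : 0 ≤ ∑ i ∈ Finset.range n, ∑ j ∈ Finset.range n, f (a i) (a j) := by
      have := hposf n (fun k => if k < n then a k else 0)
        (fun k => by by_cases h : k < n
                     · simpa [h] using hamem k h.le
                     · simpa [h] using Set.left_mem_Icc.mpr hr)
      calc (0:ℝ) ≤ _ := this
        _ = ∑ i ∈ Finset.range n, ∑ j ∈ Finset.range n, f (a i) (a j) := by
            refine Finset.sum_congr rfl (fun i hi => Finset.sum_congr rfl (fun j hj => ?_))
            rw [Finset.mem_range] at hi hj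
            simp [hi, hj]
    have hexpand : ∑ i ∈ Finset.range n, ∑ j ∈ Finset.range n, (f (a i) (a j) - ε) * (Δ * Δ)
        = (∑ i ∈ Finset.range n, ∑ j ∈ Finset.range n, f (a i) (a j)) * (Δ * Δ)
          - ε * ((n : ℝ) * Δ * ((n : ℝ) * Δ)) := by
      simp [Finset.sum_sub_distrib, Finset.sum_mul, sub_mul]
      ring
    have hnΔ : (n : ℝ) * Δ = r := by rw [hΔ]; field_simp
    rw [hexpand, hnΔ] at hsum
    nlinarith [mul_nonneg (mul_nonneg hΔpos.le hΔpos.le) hposS, hposS,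
      mul_nonneg hΔpos.le hΔpos.le]
  by_contra hneg
  push_neg at hneg
  have hrr : 0 < r * r := by positivity
  have hεp : 0 < -I / (2 * (r * r)) := div_pos (neg_pos.mpr hneg) (by positivity)
  have hk := key _ hεp
  have hval : -(-I / (2 * (r * r)) * (r * r)) = I / 2 := by field_simp
  rw [hval] at hk
  linarith

/-- Energy estimate for the homogeneous wave equation with zero initial velocity:
if `⟨u''(t), v⟩ + b(u(t), v) = 0` for all `v` in a dense subspace `V`, with `b`
symmetric nonnegative and `u'(0) = 0`, then `‖u(t)‖ ≤ ‖u(0)‖` on `[0, T]`. -/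
theorem stmt11 {H : Type*} [NormedAddCommGroup H] [InnerProductSpace ℝ H] [CompleteSpace H]
    (Vsub : Submodule ℝ H) (hdense : Dense (Vsub : Set H))
    (b : H →ₗ[ℝ] H →ₗ[ℝ] ℝ)
    (hsymm : ∀ v ∈ Vsub, ∀ w ∈ Vsub, b v w = b w v)
    (hpos : ∀ v ∈ Vsub, 0 ≤ b v v)
    (T : ℝ) (hT : 0 ≤ T)
    (u : ℝ → H) (hu : ContDiff ℝ 2 u) (huV : ∀ t, u t ∈ Vsub)
    (heq : ∀ t ∈ Set.Icc 0 T, ∀ v ∈ Vsub,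
      (inner ℝ (deriv (deriv u) t) v : ℝ) + b (u t) v = 0)
    (hinit : deriv u 0 = 0) :
    ∀ t ∈ Set.Icc 0 T, ‖u t‖ ≤ ‖u 0‖ := by
  -- regularity
  have hu' : ContDiff ℝ 1 (deriv u) := by
    have := (contDiff_succ_iff_deriv (n := 1)).mp (by exact_mod_cast hu)
    exact this.2.2
  have hu1 : Differentiable ℝ u := hu.differentiable two_ne_zero
  have hu2 : Differentiable ℝ (deriv u) := hu'.differentiable one_ne_zero
  have huc : Continuous u := hu1.continuous
  have hu'c : Continuous (deriv u) := hu2.continuous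
  have hu''c : Continuous (deriv (deriv u)) := by
    have := (contDiff_succ_iff_deriv (n := 0)).mp (by exact_mod_cast hu')
    exact this.2.2.continuous
  set u'' : ℝ → H := deriv (deriv u) with hu''def
  set w : ℝ → H := fun t => ∫ s in (0:ℝ)..t, u s with hwdef
  have hwd : ∀ t, HasDerivAt w (u t) t := by
    intro t
    exact intervalIntegral.integral_hasDerivAt_right (huc.intervalIntegrable 0 t)
      (huc.stronglyMeasurable.stronglyMeasurableAtFilter) huc.continuousAt
  have hwc : Continuous w := by
    have : Differentiable ℝ w := fun t => (hwd t).differentiableAt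
    exact this.continuous
  -- symmetry of the kernel
  have hsym2 : ∀ t ∈ Set.Icc (0:ℝ) T, ∀ s ∈ Set.Icc (0:ℝ) T,
      (inner ℝ (u'' t) (u s) : ℝ) = inner ℝ (u'' s) (u t) := by
    intro t ht s hs
    have h1 := heq t ht (u s) (huV s)
    have h2 := heq s hs (u t) (huV t)
    have h3 := hsymm (u t) (huV t) (u s) (huV s)
    linarith
  -- FTC for u''
  have hftc : ∀ c : ℝ, (∫ t in (0:ℝ)..c, u'' t) = deriv u c := by
    intro c
    rw [hu''def, intervalIntegral.integral_deriv_eq_sub (fun x _ => hu2 x)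
      (hu''c.intervalIntegrable _ _), hinit, sub_zero]
  -- pull inner product out of integrals
  have hpull : ∀ (x : H) (c : ℝ) (v : ℝ → H), Continuous v →
      (inner ℝ x (∫ s in (0:ℝ)..c, v s) : ℝ) = ∫ s in (0:ℝ)..c, (inner ℝ x (v s) : ℝ) := by
    intro x c v hv
    have := (innerSL ℝ x).intervalIntegral_comp_comm
      (hv.intervalIntegrable (μ := MeasureTheory.volume) 0 c)
    exact this.symm
  -- Step 1 : ⟪u'' t, w t⟫ = ⟪u' t, u t⟫ on [0, T]
  have step1 : ∀ t ∈ Set.Icc (0:ℝ) T, (inner ℝ (u'' t) (w t) : ℝ) = inner ℝ (deriv u t) (u t) := by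
    intro t ht
    have e1 : (inner ℝ (u'' t) (w t) : ℝ) = ∫ s in (0:ℝ)..t, (inner ℝ (u'' t) (u s) : ℝ) :=
      hpull (u'' t) t u huc
    have e2 : ∀ s ∈ Set.uIcc (0:ℝ) t, (inner ℝ (u'' t) (u s) : ℝ) = (inner ℝ (u'' s) (u t) : ℝ) := by
      intro s hs
      rw [Set.uIcc_of_le ht.1] at hs
      exact hsym2 t ht s ⟨hs.1, hs.2.trans ht.2⟩
    rw [e1, intervalIntegral.integral_congr e2]
    have e3 : (∫ s in (0:ℝ)..t, (inner ℝ (u'' s) (u t) : ℝ))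
        = inner ℝ (∫ s in (0:ℝ)..t, u'' s) (u t) := by
      rw [real_inner_comm]
      rw [hpull (u t) t u'' hu''c]
      exact intervalIntegral.integral_congr (fun s _ => real_inner_comm _ _)
    rw [e3, hftc t]
  -- Step 2 : ⟪u r, u r⟫ = ⟪u 0, u 0⟫ + ⟪u' r, w r⟫ on [0, T]
  set φ : ℝ → ℝ := fun t => (inner ℝ (deriv u t) (w t) : ℝ) - inner ℝ (u t) (u t) with hφdef
  have hφc : Continuous φ := (hu'c.inner hwc).sub (huc.inner huc)
  have hφconst : ∀ t ∈ Set.Icc (0:ℝ) T, φ t = φ 0 := by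
    apply constant_of_has_deriv_right_zero hφc.continuousOn
    intro t ht
    have htIcc : t ∈ Set.Icc (0:ℝ) T := ⟨ht.1, ht.2.le⟩
    have hd1 : HasDerivAt (fun t => (inner ℝ (deriv u t) (w t) : ℝ))
        ((inner ℝ (deriv u t) (u t) : ℝ) + inner ℝ (u'' t) (w t)) t :=
      HasDerivAt.inner ℝ (hu2 t).hasDerivAt (hwd t)
    have hd2 : HasDerivAt (fun t => (inner ℝ (u t) (u t) : ℝ))
        ((inner ℝ (u t) (deriv u t) : ℝ) + inner ℝ (deriv u t) (u t)) t :=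
      HasDerivAt.inner ℝ (hu1 t).hasDerivAt (hu1 t).hasDerivAt
    have hφd : HasDerivAt φ
        (((inner ℝ (deriv u t) (u t) : ℝ) + inner ℝ (u'' t) (w t))
          - ((inner ℝ (u t) (deriv u t) : ℝ) + inner ℝ (deriv u t) (u t))) t := hd1.sub hd2
    have h0 : ((inner ℝ (deriv u t) (u t) : ℝ) + inner ℝ (u'' t) (w t))
        - ((inner ℝ (u t) (deriv u t) : ℝ) + inner ℝ (deriv u t) (u t)) = 0 := by
      rw [step1 t htIcc, real_inner_comm (u t) (deriv u t)]
      ring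
    rw [h0] at hφd
    exact hφd.hasDerivWithinAt
  -- main conclusion
  intro r hr
  have hφr := hφconst r hr
  have hw0 : w 0 = 0 := by simp [hwdef]
  have hφ0 : φ 0 = -(inner ℝ (u 0) (u 0) : ℝ) := by
    have : φ 0 = (inner ℝ (deriv u 0) (w 0) : ℝ) - inner ℝ (u 0) (u 0) := rfl
    rw [this, hinit, hw0]
    simp
  -- Step 4 : positivity, ⟪u' r, w r⟫ ≤ 0
  have hkerc : Continuous fun p : ℝ × ℝ => -(inner ℝ (u'' p.1) (u p.2) : ℝ) :=
    ((hu''c.comp continuous_fst).inner (huc.comp continuous_snd)).neg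
  have hQ : 0 ≤ ∫ t in (0:ℝ)..r, ∫ s in (0:ℝ)..r, -(inner ℝ (u'' t) (u s) : ℝ) := by
    apply dbl_int_nonneg hkerc hr.1
    intro n x hx
    have hxT : ∀ i, x i ∈ Set.Icc (0:ℝ) T := fun i => ⟨(hx i).1, (hx i).2.trans hr.2⟩
    have heq' : ∀ i j : ℕ, -(inner ℝ (u'' (x i)) (u (x j)) : ℝ) = b (u (x i)) (u (x j)) := by
      intro i j
      have := heq (x i) (hxT i) (u (x j)) (huV (x j))
      linarith
    calc (0:ℝ) ≤ b (∑ i ∈ Finset.range n, u (x i)) (∑ j ∈ Finset.range n, u (x j)) :=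
          hpos _ (Submodule.sum_mem Vsub (fun i _ => huV (x i)))
      _ = ∑ i ∈ Finset.range n, ∑ j ∈ Finset.range n, b (u (x i)) (u (x j)) := by
          simp only [map_sum, LinearMap.sum_apply]
          rw [Finset.sum_comm]
      _ = ∑ i ∈ Finset.range n, ∑ j ∈ Finset.range n, -(inner ℝ (u'' (x i)) (u (x j)) : ℝ) := by
          exact Finset.sum_congr rfl (fun i _ => Finset.sum_congr rfl
            (fun j _ => (heq' i j).symm))
  have hQ2 : (∫ t in (0:ℝ)..r, ∫ s in (0:ℝ)..r, -(inner ℝ (u'' t) (u s) : ℝ))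
      = -(inner ℝ (deriv u r) (w r) : ℝ) := by
    have einner : ∀ t : ℝ, (∫ s in (0:ℝ)..r, -(inner ℝ (u'' t) (u s) : ℝ))
        = -(inner ℝ (u'' t) (w r) : ℝ) := by
      intro t
      rw [intervalIntegral.integral_neg, ← hpull (u'' t) r u huc]
    rw [intervalIntegral.integral_congr (fun t _ => einner t), intervalIntegral.integral_neg]
    congr 1
    have : (∫ t in (0:ℝ)..r, (inner ℝ (u'' t) (w r) : ℝ))
        = inner ℝ (∫ t in (0:ℝ)..r, u'' t) (w r) := by
      rw [real_inner_comm]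
      rw [hpull (w r) r u'' hu''c]
      exact intervalIntegral.integral_congr (fun s _ => real_inner_comm _ _)
    rw [this, hftc r]
  have hwle : (inner ℝ (deriv u r) (w r) : ℝ) ≤ 0 := by
    rw [hQ2] at hQ; linarith
  -- finish
  have hkey : (inner ℝ (u r) (u r) : ℝ) ≤ inner ℝ (u 0) (u 0) := by
    have : (inner ℝ (deriv u r) (w r) : ℝ) - inner ℝ (u r) (u r) = -(inner ℝ (u 0) (u 0) : ℝ) := by
      rw [← hφ0]; exact hφr
    linarith
  have h1 : (inner ℝ (u r) (u r) : ℝ) = ‖u r‖ * ‖u r‖ := real_inner_self_eq_norm_mul_norm _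
  have h2 : (inner ℝ (u 0) (u 0) : ℝ) = ‖u 0‖ * ‖u 0‖ := real_inner_self_eq_norm_mul_norm _
  nlinarith [norm_nonneg (u r), norm_nonneg (u 0), hkey]
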